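/- arXiv:2204.13416 — 2 statements merged into one kernel-verified Lean document; each statement's English description precedes it below -/
import Mathlib

section
/- Let Y be a complex Banach space, let Z be a bounded skew-hermitian operator on Y which has a bounded ℬ-calculus, and let K be a compact subset of iℝ with σ(Z) contained in the interior of K relative to iℝ. Let Ψ be a bounded C(K)-calculus for Z and let Φ₀ be a bounded C₀(iℝ)-calculus for Z. Then for every f ∈ C₀(iℝ), Ψ(f|_K) = Φ₀(f). -/
open Complex MeasureTheory Filter Topology
open scoped ENNReal NNReal Classical

noncomputable section

variable {X : Type*} [NormedAddCommGroup X] [NormedSpace ℂ X]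

/-- Membership in the analytic Besov algebra `ℬ`.  We represent elements of `ℬ` as
functions on `ℂ` which are holomorphic on the open right half-plane `ℂ₊`, together with
their (bounded, continuous) extension to the closed right half-plane;  values off the
closed half-plane are irrelevant. -/
def MemB (f : ℂ → ℂ) : Prop :=
  DifferentiableOn ℂ f {z : ℂ | 0 < z.re} ∧
  ContinuousOn f {z : ℂ | 0 ≤ z.re} ∧
  (∃ M : ℝ, ∀ z : ℂ, 0 ≤ z.re → ‖f z‖ ≤ M) ∧
  (∫⁻ α in Set.Ioi (0:ℝ), ⨆ β : ℝ, (‖deriv f ((α : ℂ) + (β : ℂ) * Complex.I)‖₊ : ℝ≥0∞)) < ⊤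

/-- The norm `‖f‖_ℬ = ‖f‖_{ℬ₀} + ‖f‖_∞` on the Besov algebra `ℬ`. -/
def bNorm (f : ℂ → ℂ) : ℝ :=
  (∫⁻ α in Set.Ioi (0:ℝ), ⨆ β : ℝ, (‖deriv f ((α : ℂ) + (β : ℂ) * Complex.I)‖₊ : ℝ≥0∞)).toReal
    + ⨆ z : {z : ℂ // 0 < z.re}, ‖f z‖

/-- A bounded operator `Z` is skew-hermitian if `e^{tZ}` is isometric for all real `t`. -/
def IsSkewHermitianBdd (Z : X →L[ℂ] X) : Prop :=
  ∀ (t : ℝ) (y : X), ‖NormedSpace.exp (t • Z) y‖ = ‖y‖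

/-- `Φ` is a bounded `ℬ`-calculus for the bounded operator `Z` : a bounded algebra
homomorphism `ℬ → L(X)` sending each `r_λ = (λ + ·)⁻¹`, `Re λ > 0`, to `(λ + Z)⁻¹`. -/
def IsBCalculusBdd (Z : X →L[ℂ] X) (Φ : (ℂ → ℂ) → X →L[ℂ] X) : Prop :=
  (∀ f g, MemB f → MemB g → Φ (f + g) = Φ f + Φ g) ∧
  (∀ (c : ℂ) (f), MemB f → Φ (c • f) = c • Φ f) ∧
  (∀ f g, MemB f → MemB g → Φ (f * g) = Φ f * Φ g) ∧
  (∃ C : ℝ, ∀ f, MemB f → ‖Φ f‖ ≤ C * bNorm f) ∧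
  (∀ l : ℂ, 0 < l.re →
      Φ (fun z => (l + z)⁻¹) * (l • (1 : X →L[ℂ] X) + Z) = 1 ∧
      (l • (1 : X →L[ℂ] X) + Z) * Φ (fun z => (l + z)⁻¹) = 1)

/-- Membership in `C₀(iℝ)`; we identify a function on `iℝ` with the function
`β ↦ f(iβ)` on `ℝ`, so `C₀(iℝ)` consists of the continuous functions `ℝ → ℂ`
vanishing at infinity. -/
def MemC0 (f : ℝ → ℂ) : Prop := Continuous f ∧ Tendsto f (cocompact ℝ) (𝓝 0)

/-- `Φ₀` is a bounded `C₀(iℝ)`-calculus for the bounded operator `Z` : a bounded algebra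
homomorphism `C₀(iℝ) → L(X)` sending each `r_λ|_{iℝ}`, `λ ∉ iℝ`, to `(λ + Z)⁻¹`. -/
def IsC0CalculusBdd (Z : X →L[ℂ] X) (Φ₀ : (ℝ → ℂ) → X →L[ℂ] X) : Prop :=
  (∀ f g, MemC0 f → MemC0 g → Φ₀ (f + g) = Φ₀ f + Φ₀ g) ∧
  (∀ (c : ℂ) (f), MemC0 f → Φ₀ (c • f) = c • Φ₀ f) ∧
  (∀ f g, MemC0 f → MemC0 g → Φ₀ (f * g) = Φ₀ f * Φ₀ g) ∧
  (∃ C : ℝ, ∀ f, MemC0 f → ‖Φ₀ f‖ ≤ C * ⨆ β : ℝ, ‖f β‖) ∧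
  (∀ l : ℂ, l.re ≠ 0 →
      Φ₀ (fun β => (l + (β : ℂ) * Complex.I)⁻¹) * (l • (1 : X →L[ℂ] X) + Z) = 1 ∧
      (l • (1 : X →L[ℂ] X) + Z) * Φ₀ (fun β => (l + (β : ℂ) * Complex.I)⁻¹) = 1)

/-- `Ψ` is a bounded `C(K)`-calculus for the bounded operator `Z` : a continuous unital
algebra homomorphism `C(K) → L(X)` mapping the identity function `ι(z) = z` to `Z`. -/
def IsCKCalculus (K : Set ℂ) (Z : X →L[ℂ] X) (Ψ : C(↥K, ℂ) → X →L[ℂ] X) : Prop :=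
  (∀ g h : C(↥K, ℂ), Ψ (g + h) = Ψ g + Ψ h) ∧
  (∀ (c : ℂ) (g : C(↥K, ℂ)), Ψ (c • g) = c • Ψ g) ∧
  (∀ g h : C(↥K, ℂ), Ψ (g * h) = Ψ g * Ψ h) ∧
  Ψ 1 = 1 ∧
  (∃ C : ℝ, ∀ g : C(↥K, ℂ), ‖Ψ g‖ ≤ C * ⨆ z : K, ‖g z‖) ∧
  Ψ ⟨fun z => (z : ℂ), continuous_subtype_val⟩ = Z

lemma res_ne (l : ℂ) (hl : l.re ≠ 0) (β : ℝ) : l + (β:ℂ) * Complex.I ≠ 0 := by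
  intro h
  have := congrArg Complex.re h
  simp at this
  exact hl this

lemma memC0_res (l : ℂ) (hl : l.re ≠ 0) :
    MemC0 (fun β : ℝ => (l + (β:ℂ) * Complex.I)⁻¹) := by
  constructor
  · exact (continuous_const.add (Complex.continuous_ofReal.mul continuous_const)).inv₀
      (res_ne l hl)
  · rw [tendsto_zero_iff_norm_tendsto_zero]
    have h1 : Tendsto (fun β : ℝ => |β| - ‖l‖) (cocompact ℝ) atTop := by
      simpa [Real.norm_eq_abs, sub_eq_add_neg] using
        tendsto_atTop_add_const_right (cocompact ℝ) (-‖l‖) tendsto_norm_cocompact_atTop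
    have h2 : Tendsto (fun β : ℝ => (|β| - ‖l‖)⁻¹) (cocompact ℝ) (𝓝 0) :=
      h1.inv_tendsto_atTop
    apply squeeze_zero' (Eventually.of_forall fun β => norm_nonneg _) ?_ h2
    filter_upwards [h1.eventually_ge_atTop (‖l‖ + 1)] with β hβ
    have hpos : (0:ℝ) < |β| - ‖l‖ := by nlinarith [norm_nonneg l]
    have hle : |β| - ‖l‖ ≤ ‖l + (β:ℂ) * Complex.I‖ := by
      have h3 := norm_sub_norm_le ((β:ℂ) * Complex.I) (-l)
      rw [sub_neg_eq_add, norm_neg] at h3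
      calc |β| - ‖l‖ ≤ ‖(β:ℂ) * Complex.I‖ - ‖l‖ := by simp
        _ ≤ ‖(β:ℂ) * Complex.I + l‖ := h3
        _ = ‖l + (β:ℂ) * Complex.I‖ := by rw [add_comm]
    rw [norm_inv]
    exact inv_anti₀ hpos hle

def uu : ℝ → ℂ := fun β => ((1:ℂ) + (β:ℂ) * Complex.I)⁻¹

lemma memC0_uu : MemC0 uu := memC0_res 1 (by norm_num)

lemma uu_ne (β : ℝ) : uu β ≠ 0 := inv_ne_zero (res_ne 1 (by norm_num) β)

lemma uu_inv_im (β : ℝ) : ((uu β)⁻¹).im = β := by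
  rw [uu, inv_inv]
  simp

lemma norm_uu_le_one (β : ℝ) : ‖uu β‖ ≤ 1 := by
  rw [uu, norm_inv]
  rw [inv_le_one_iff₀]
  right
  calc (1:ℝ) = |(1 + (β:ℂ)*Complex.I).re| := by simp
    _ ≤ ‖(1 + (β:ℂ)*Complex.I)‖ := Complex.abs_re_le_norm _

lemma norm_uu_ge (β : ℝ) : (1 + |β|)⁻¹ ≤ ‖uu β‖ := by
  rw [uu, norm_inv]
  apply inv_anti₀
  · rw [norm_pos_iff]
    exact res_ne 1 (by norm_num) β
  · calc ‖(1:ℂ) + (β:ℂ)*Complex.I‖ ≤ ‖(1:ℂ)‖ + ‖(β:ℂ)*Complex.I‖ := norm_add_le _ _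
      _ = 1 + |β| := by simp

def SS : Set ℂ := closure (Set.range uu)

lemma isCompact_SS : IsCompact SS := by
  apply Metric.isCompact_of_isClosed_isBounded isClosed_closure
  apply Bornology.IsBounded.closure
  apply Bornology.IsBounded.subset (Metric.isBounded_closedBall (x := (0:ℂ)) (r := 1))
  rintro z ⟨β, rfl⟩
  simpa [Metric.mem_closedBall] using norm_uu_le_one β

lemma uu_mem_SS (β : ℝ) : uu β ∈ SS := subset_closure (Set.mem_range_self β)

lemma zero_mem_SS : (0:ℂ) ∈ SS := by
  have h1 : Tendsto uu (cocompact ℝ) (𝓝 0) := memC0_uu.2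
  have h2 : Tendsto uu atTop (𝓝 0) := by
    apply h1.mono_left
    rw [cocompact_eq_atBot_atTop]
    exact le_sup_right
  exact mem_closure_of_tendsto h2 (Eventually.of_forall fun β => Set.mem_range_self β)

lemma mem_SS_of_ne (z : ℂ) (hz : z ∈ SS) (hz0 : z ≠ 0) : ∃ β : ℝ, uu β = z := by
  refine ⟨z⁻¹.im, ?_⟩
  have hcont : ContinuousAt (fun w : ℂ => uu w⁻¹.im) z := by
    apply (memC0_uu.1.continuousAt).comp
    exact Complex.continuous_im.continuousAt.comp (continuousAt_inv₀ hz0)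
  have hne : (𝓝[Set.range uu] z).NeBot := mem_closure_iff_nhdsWithin_neBot.mp hz
  have t1 : Tendsto (fun w : ℂ => uu w⁻¹.im) (𝓝[Set.range uu] z) (𝓝 (uu z⁻¹.im)) :=
    hcont.continuousWithinAt
  have t2 : Tendsto (fun w : ℂ => uu w⁻¹.im) (𝓝[Set.range uu] z) (𝓝 z) := by
    apply Tendsto.congr' ?_ (tendsto_id.mono_left nhdsWithin_le_nhds)
    filter_upwards [self_mem_nhdsWithin] with w hw
    obtain ⟨β, rfl⟩ := hw
    rw [uu_inv_im]
    rfl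
  exact tendsto_nhds_unique t1 t2

lemma memC0_zero : MemC0 (fun _ : ℝ => (0:ℂ)) := ⟨continuous_const, tendsto_const_nhds⟩

lemma MemC0.add' {f g : ℝ → ℂ} (hf : MemC0 f) (hg : MemC0 g) :
    MemC0 (fun β => f β + g β) := by
  refine ⟨hf.1.add hg.1, ?_⟩
  simpa using hf.2.add hg.2

lemma MemC0.smul' (c : ℂ) {f : ℝ → ℂ} (hf : MemC0 f) :
    MemC0 (fun β => c * f β) := by
  refine ⟨continuous_const.mul hf.1, ?_⟩
  simpa using hf.2.const_mul c

lemma MemC0.mul' {f g : ℝ → ℂ} (hf : MemC0 f) (hg : MemC0 g) :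
    MemC0 (fun β => f β * g β) := by
  refine ⟨hf.1.mul hg.1, ?_⟩
  simpa using hf.2.mul hg.2

lemma MemC0.sub' {f g : ℝ → ℂ} (hf : MemC0 f) (hg : MemC0 g) :
    MemC0 (fun β => f β - g β) := by
  refine ⟨hf.1.sub hg.1, ?_⟩
  simpa using hf.2.sub hg.2

lemma FF_cont {f : ℝ → ℂ} (hf : MemC0 f) :
    Continuous (fun z : SS => if (z:ℂ) = 0 then (0:ℂ) else f ((z:ℂ)⁻¹).im) := by
  rw [continuous_iff_continuousAt]
  intro z₀
  by_cases h0 : (z₀:ℂ) = 0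
  · rw [ContinuousAt]
    have hval : (if (z₀:ℂ) = 0 then (0:ℂ) else f ((z₀:ℂ)⁻¹).im) = 0 := if_pos h0
    rw [hval, Metric.tendsto_nhds]
    intro ε hε
    obtain ⟨k, hk, hkf⟩ := (hasBasis_cocompact.tendsto_iff (Metric.nhds_basis_ball)).mp hf.2 ε hε
    obtain ⟨R, hR⟩ := hk.isBounded.subset_closedBall 0
    have hRpos : (0:ℝ) ≤ R ⊔ 0 := le_sup_right
    have hδ : (0:ℝ) < ((R ⊔ 0) + 2)⁻¹ := by positivity
    rw [Metric.eventually_nhds_iff]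
    refine ⟨((R ⊔ 0) + 2)⁻¹, hδ, ?_⟩
    intro z hdz
    by_cases hz0 : (z:ℂ) = 0
    · simpa [hz0] using hε
    · obtain ⟨β, hβ⟩ := mem_SS_of_ne (z:ℂ) z.2 hz0
      rw [if_neg hz0, ← hβ, uu_inv_im]
      have hzn : ‖(z:ℂ)‖ < ((R ⊔ 0) + 2)⁻¹ := by
        have : dist (z:ℂ) (z₀:ℂ) < ((R ⊔ 0) + 2)⁻¹ := by
          rw [← Subtype.dist_eq]; exact hdz
        simpa [dist_eq_norm, h0] using this
      have h1 : (1 + |β|)⁻¹ < ((R ⊔ 0) + 2)⁻¹ := lt_of_le_of_lt (hβ ▸ norm_uu_ge β) hzn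
      have h2 : (R ⊔ 0) + 2 < 1 + |β| := by
        have hb : (0:ℝ) < 1 + |β| := by positivity
        have := (inv_lt_inv₀ hb (by positivity)).mp h1
        linarith
      have hβk : β ∉ k := by
        intro hmem
        have := hR hmem
        rw [Metric.mem_closedBall, Real.dist_eq, sub_zero] at this
        have : |β| ≤ R ⊔ 0 := le_trans this le_sup_left
        linarith
      simpa [Metric.mem_ball] using hkf β hβk
  · have hev : ∀ᶠ z : SS in 𝓝 z₀, (z:ℂ) ≠ 0 := by
      have hopen : IsOpen {z : SS | (z:ℂ) ≠ 0} :=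
        isOpen_compl_singleton.preimage continuous_subtype_val
      exact hopen.mem_nhds h0
    have hnice : ContinuousAt (fun z : SS => f ((z:ℂ)⁻¹).im) z₀ := by
      apply hf.1.continuousAt.comp
      apply Complex.continuous_im.continuousAt.comp
      exact (continuousAt_inv₀ h0).comp continuous_subtype_val.continuousAt
    apply hnice.congr
    filter_upwards [hev] with z hz
    rw [if_neg hz]

instance : CompactSpace SS := isCompact_iff_compactSpace.mp isCompact_SS

def iotaS : C(SS, ℂ) := ⟨fun z => (z:ℂ), continuous_subtype_val⟩

lemma dense_adjoin : (StarAlgebra.adjoin ℂ {iotaS}).topologicalClosure = ⊤ := by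
  apply ContinuousMap.starSubalgebra_topologicalClosure_eq_top_of_separatesPoints
  intro x y hxy
  exact ⟨_, ⟨iotaS, StarAlgebra.subset_adjoin ℂ {iotaS} rfl, rfl⟩,
    Subtype.coe_injective.ne hxy⟩

lemma mem_closure_adjoin (F : C(SS, ℂ)) :
    F ∈ closure ((StarAlgebra.adjoin ℂ {iotaS} : StarSubalgebra ℂ C(SS,ℂ)) :
      Set C(SS, ℂ)) := by
  have : F ∈ (StarAlgebra.adjoin ℂ {iotaS}).topologicalClosure := by
    rw [dense_adjoin]; trivial
  exact this

def uS (β : ℝ) : SS := ⟨uu β, uu_mem_SS β⟩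

def zS : SS := ⟨0, zero_mem_SS⟩

def eK (K : Set ℂ) : C(↥K, SS) :=
  ⟨fun z => uS (z:ℂ).im, by
    apply Continuous.subtype_mk
    exact memC0_uu.1.comp (Complex.continuous_im.comp continuous_subtype_val)⟩

def FF (f : ℝ → ℂ) (hf : MemC0 f) : C(SS, ℂ) :=
  ⟨fun z => if (z:ℂ) = 0 then 0 else f ((z:ℂ)⁻¹).im, FF_cont hf⟩

lemma FF_uS (f : ℝ → ℂ) (hf : MemC0 f) (β : ℝ) : FF f hf (uS β) = f β := by
  show (if uu β = 0 then 0 else f ((uu β)⁻¹).im) = f β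
  rw [if_neg (uu_ne β), uu_inv_im]

lemma FF_zS (f : ℝ → ℂ) (hf : MemC0 f) : FF f hf zS = 0 := by
  show (if (0:ℂ) = 0 then 0 else f ((0:ℂ)⁻¹).im) = 0
  rw [if_pos rfl]

def ww : ℝ → ℂ := fun β => ((1:ℂ) - (β:ℂ) * Complex.I)⁻¹

lemma conj_uu (β : ℝ) : (starRingEnd ℂ) (uu β) = ww β := by
  rw [uu, ww, map_inv₀]
  congr 1
  simp [Complex.ext_iff]

lemma ww_eq (β : ℝ) : ww β = -(((-1:ℂ) + (β:ℂ) * Complex.I)⁻¹) := by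
  rw [ww, ← inv_neg]
  congr 1
  ring

lemma ww_ne (β : ℝ) : (1:ℂ) - (β:ℂ) * Complex.I ≠ 0 := by
  intro h
  have := congrArg Complex.re h
  simp at this

lemma memC0_ww : MemC0 ww := by
  have h := MemC0.smul' (-1 : ℂ) (memC0_res (-1) (by norm_num))
  have hfun : ww = fun β : ℝ => (-1 : ℂ) * ((-1:ℂ) + (β:ℂ) * Complex.I)⁻¹ := by
    funext β
    rw [ww_eq β, neg_one_mul]
  rw [hfun]
  exact h

/-- **Compatibility of the `C(K)`-calculus with the `C₀(iℝ)`-calculus**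
(Lemma 3.1(a)).  Functions on `iℝ` are identified with functions of `β ∈ ℝ` via
`β ↦ f(iβ)`; the restriction of `f` to `K ⊆ iℝ` is then `z ↦ f (Im z)`. -/
theorem ck_calculus_compatible_c0 [CompleteSpace X]
    (Z : X →L[ℂ] X) (hZ : IsSkewHermitianBdd Z)
    (Φ : (ℂ → ℂ) → X →L[ℂ] X) (hΦ : IsBCalculusBdd Z Φ)
    (K : Set ℂ) (hK : IsCompact K) (hKi : K ⊆ {z : ℂ | z.re = 0})
    (hspec : ∀ w ∈ spectrum ℂ Z, ∃ ε > (0:ℝ),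
      ∀ z : ℂ, z.re = 0 → ‖z - w‖ < ε → z ∈ K)
    (Ψ : C(↥K, ℂ) → X →L[ℂ] X) (hΨ : IsCKCalculus K Z Ψ)
    (Φ₀ : (ℝ → ℂ) → X →L[ℂ] X) (hΦ₀ : IsC0CalculusBdd Z Φ₀) :
    ∀ (f : ℝ → ℂ) (hf : MemC0 f),
      Ψ ⟨fun z => f (z : ℂ).im,
          hf.1.comp (Complex.continuous_im.comp continuous_subtype_val)⟩ = Φ₀ f := by
  intro f hf
  obtain ⟨hΨadd, hΨsmul, hΨmul, hΨone, ⟨C₁, hC₁⟩, hΨid⟩ := hΨ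
  obtain ⟨hadd, hsmul, hmul, ⟨C₂, hC₂⟩, hres⟩ := hΦ₀
  set D₁ := max C₁ 0 with hD₁
  set D₂ := max C₂ 0 with hD₂
  have hD₁0 : 0 ≤ D₁ := le_max_right _ _
  have hD₂0 : 0 ≤ D₂ := le_max_right _ _
  have hC₁' : ∀ g : C(↥K, ℂ), ‖Ψ g‖ ≤ D₁ * ⨆ z : K, ‖g z‖ := fun g =>
    le_trans (hC₁ g) (mul_le_mul_of_nonneg_right (le_max_left _ _)
      (Real.iSup_nonneg fun z => norm_nonneg _))
  have hC₂' : ∀ g : ℝ → ℂ, MemC0 g → ‖Φ₀ g‖ ≤ D₂ * ⨆ β : ℝ, ‖g β‖ := fun g hg =>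
    le_trans (hC₂ g hg) (mul_le_mul_of_nonneg_right (le_max_left _ _)
      (Real.iSup_nonneg fun z => norm_nonneg _))
  have hzre : ∀ z : ↥K, (z:ℂ).re = 0 := fun z => hKi z.2
  have hKz : ∀ z : ↥K, ((z:ℂ).im : ℂ) * Complex.I = (z:ℂ) := by
    intro z
    simp [Complex.ext_iff, hzre z]
  -- inverses through Ψ
  have hΨinv : ∀ (gK aK : C(↥K, ℂ)) (a : X →L[ℂ] X),
      Ψ aK = a → (∀ z : ↥K, gK z * aK z = 1) → Ψ gK * a = 1 ∧ a * Ψ gK = 1 := by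
    intro gK aK a ha hm
    have h1 : gK * aK = 1 := by ext z; exact hm z
    have h2 : aK * gK = 1 := by
      ext z
      show aK z * gK z = 1
      rw [mul_comm]; exact hm z
    constructor
    · rw [← ha, ← hΨmul, h1, hΨone]
    · rw [← ha, ← hΨmul, h2, hΨone]
  -- Φ₀ 0 = 0
  have hΦ₀0 : Φ₀ (fun _ : ℝ => (0:ℂ)) = 0 := by
    have h := hadd (fun _ => (0:ℂ)) (fun _ => (0:ℂ)) memC0_zero memC0_zero
    have h2 : ((fun _ : ℝ => (0:ℂ)) + fun _ : ℝ => (0:ℂ)) = (fun _ : ℝ => (0:ℂ)) := by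
      funext β; simp
    rw [h2] at h
    have := congrArg (fun T => T - Φ₀ (fun _ : ℝ => (0:ℂ))) h
    simpa using this.symm
  -- the key induction
  have key : ∀ g : C(↥SS, ℂ), g ∈ StarAlgebra.adjoin ℂ {iotaS} →
      MemC0 (fun β => g (uS β) - g zS) ∧
      Ψ (g.comp (eK K)) = g zS • (1 : X →L[ℂ] X) + Φ₀ (fun β => g (uS β) - g zS) := by
    intro g hg
    have hg' : g ∈ Algebra.adjoin ℂ ({iotaS} ∪ star {iotaS}) := hg
    clear hg
    induction hg' using Algebra.adjoin_induction with
    | mem x hx =>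
      rcases hx with hx | hx
      · -- x = iotaS
        rw [Set.mem_singleton_iff] at hx
        subst hx
        have hfun : (fun β : ℝ => iotaS (uS β) - iotaS zS) = uu := by
          funext β
          show uu β - (0:ℂ) = uu β
          rw [sub_zero]
        have hz0 : iotaS zS = 0 := rfl
        refine ⟨hfun ▸ memC0_uu, ?_⟩
        rw [hfun, hz0, zero_smul, zero_add]
        -- Ψ (iotaS.comp (eK K)) = Φ₀ uu
        have haK : Ψ ((1:ℂ) • 1 + (⟨fun z => (z : ℂ), continuous_subtype_val⟩ : C(↥K, ℂ)))
            = (1:ℂ) • (1 : X →L[ℂ] X) + Z := by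
          rw [hΨadd, hΨsmul, hΨone, hΨid]
        have hspec : ∀ z : ↥K, (iotaS.comp (eK K)) z *
            ((1:ℂ) • 1 + (⟨fun z => (z : ℂ), continuous_subtype_val⟩ : C(↥K, ℂ))) z = 1 := by
          intro z
          show uu ((z:ℂ).im) * ((1:ℂ) • (1:ℂ) + (z:ℂ)) = 1
          have h' : (1:ℂ) + ((z:ℂ).im:ℂ) * Complex.I = 1 + (z:ℂ) := by rw [hKz z]
          rw [smul_eq_mul, one_mul, uu, ← h']
          exact inv_mul_cancel₀ (res_ne 1 (by norm_num) _)
        have hinv := hΨinv (iotaS.comp (eK K)) _ _ haK hspec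
        have hr := hres 1 (by norm_num)
        exact left_inv_eq_right_inv hinv.1 hr.2
      · -- x = star iotaS
        rw [Set.star_singleton, Set.mem_singleton_iff] at hx
        subst hx
        have hfun : (fun β : ℝ => (star iotaS) (uS β) - (star iotaS) zS) = ww := by
          funext β
          show star (uu β) - star ((0:ℂ)) = ww β
          rw [star_zero, sub_zero, ← conj_uu]
          rfl
        have hz0 : (star iotaS) zS = 0 := by
          show star ((0:ℂ)) = 0
          exact star_zero ℂ
        refine ⟨hfun ▸ memC0_ww, ?_⟩
        rw [hfun, hz0, zero_smul, zero_add]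
        -- Ψ ((star iotaS).comp (eK K)) = Φ₀ ww
        have haK : Ψ ((1 : C(↥K, ℂ)) - (⟨fun z => (z : ℂ), continuous_subtype_val⟩ : C(↥K, ℂ)))
            = 1 - Z := by
          have h1 := hΨadd ((1 : C(↥K, ℂ)) - ⟨fun z => (z : ℂ), continuous_subtype_val⟩)
            (⟨fun z => (z : ℂ), continuous_subtype_val⟩)
          rw [sub_add_cancel, hΨone, hΨid] at h1
          rw [eq_sub_iff_add_eq, ← h1]
        have hspec : ∀ z : ↥K, ((star iotaS).comp (eK K)) z *
            ((1 : C(↥K, ℂ)) - (⟨fun z => (z : ℂ), continuous_subtype_val⟩ : C(↥K, ℂ))) z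
            = 1 := by
          intro z
          show star (uu ((z:ℂ).im)) * ((1:ℂ) - (z:ℂ)) = 1
          have : star (uu ((z:ℂ).im)) = ww ((z:ℂ).im) := conj_uu _
          have h' : (1:ℂ) - ((z:ℂ).im:ℂ) * Complex.I = 1 - (z:ℂ) := by rw [hKz z]
          rw [this, ww, ← h']
          exact inv_mul_cancel₀ (ww_ne _)
        have hinv := hΨinv ((star iotaS).comp (eK K)) _ _ haK hspec
        -- Φ₀ ww is a right inverse of (1 - Z)
        have hr := hres (-1) (by norm_num)
        have hwwrr : ww = (-1:ℂ) • (fun β : ℝ => ((-1:ℂ) + (β:ℂ) * Complex.I)⁻¹) := by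
          funext β
          rw [ww_eq β]
          simp
        have hΦww : Φ₀ ww = -Φ₀ (fun β : ℝ => ((-1:ℂ) + (β:ℂ) * Complex.I)⁻¹) := by
          rw [hwwrr, hsmul (-1) _ (memC0_res (-1) (by norm_num))]
          simp
        have hneg : ((-1:ℂ) • (1 : X →L[ℂ] X) + Z) = -(1 - Z) := by
          rw [neg_smul, one_smul]
          abel
        have hright : (1 - Z) * Φ₀ ww = 1 := by
          rw [hΦww, mul_neg, ← neg_mul, ← hneg]
          exact hr.2
        exact left_inv_eq_right_inv hinv.1 hright
    | algebraMap r =>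
      have happ : ∀ w : SS, (algebraMap ℂ C(↥SS, ℂ) r) w = r := fun w => rfl
      have hfun : (fun β : ℝ => (algebraMap ℂ C(↥SS, ℂ) r) (uS β)
          - (algebraMap ℂ C(↥SS, ℂ) r) zS) = (fun _ : ℝ => (0:ℂ)) := by
        funext β
        rw [happ, happ, sub_self]
      constructor
      · rw [hfun]; exact memC0_zero
      · rw [hfun, hΦ₀0, happ, add_zero]
        have hcomp : (algebraMap ℂ C(↥SS, ℂ) r).comp (eK K) = r • (1 : C(↥K, ℂ)) := by
          ext z
          show r = r * 1
          rw [mul_one]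
        rw [hcomp, hΨsmul, hΨone]
    | add x y hx hy px py =>
      obtain ⟨px1, px2⟩ := px
      obtain ⟨py1, py2⟩ := py
      have hfun : (fun β : ℝ => (x + y) (uS β) - (x + y) zS)
          = (fun β => x (uS β) - x zS) + (fun β => y (uS β) - y zS) := by
        funext β
        show x (uS β) + y (uS β) - (x zS + y zS) = _
        simp only [Pi.add_apply]
        ring
      constructor
      · rw [hfun]; exact px1.add' py1
      · rw [hfun, hadd _ _ px1 py1, ContinuousMap.add_comp, hΨadd, px2, py2]
        show _ = (x zS + y zS) • (1 : X →L[ℂ] X) + _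
        rw [add_smul]
        abel
    | mul x y hx hy px py =>
      obtain ⟨px1, px2⟩ := px
      obtain ⟨py1, py2⟩ := py
      set a := x zS with ha
      set b := y zS with hb
      set x' : ℝ → ℂ := fun β => x (uS β) - a with hx'
      set y' : ℝ → ℂ := fun β => y (uS β) - b with hy'
      have hfun : (fun β : ℝ => (x * y) (uS β) - (x * y) zS)
          = (fun β => x' β * y' β) + ((fun β => b * x' β) + fun β => a * y' β) := by
        funext β
        show x (uS β) * y (uS β) - (x zS * y zS)
          = x' β * y' β + (b * x' β + a * y' β)
        simp only [hx', hy', ha, hb]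
        ring
      have hm1 : MemC0 (fun β => x' β * y' β) := px1.mul' py1
      have hm2 : MemC0 (fun β => b * x' β) := px1.smul' b
      have hm3 : MemC0 (fun β => a * y' β) := py1.smul' a
      have hm4 : MemC0 ((fun β => b * x' β) + fun β => a * y' β) := hm2.add' hm3
      constructor
      · rw [hfun]; exact hm1.add' hm4
      · rw [hfun, hadd _ _ hm1 hm4, hadd _ _ hm2 hm3]
        have hbx : (fun β => b * x' β) = b • x' := rfl
        have hay : (fun β => a * y' β) = a • y' := rfl
        rw [hbx, hay, hsmul b x' px1, hsmul a y' py1]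
        have hxy' : (fun β => x' β * y' β) = x' * y' := rfl
        rw [hxy', hmul _ _ px1 py1]
        rw [ContinuousMap.mul_comp, hΨmul, px2, py2]
        show (a • (1 : X →L[ℂ] X) + Φ₀ x') * (b • (1 : X →L[ℂ] X) + Φ₀ y')
          = (a * b) • (1 : X →L[ℂ] X) + (Φ₀ x' * Φ₀ y' + (b • Φ₀ x' + a • Φ₀ y'))
        simp only [mul_add, add_mul, smul_mul_assoc, mul_smul_comm, one_mul, mul_one,
          smul_smul, smul_add, mul_comm b a]
        abel
  -- the function F
  set F : C(↥SS, ℂ) := FF f hf with hFdef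
  -- reduce the goal to `Ψ (F.comp (eK K)) = Φ₀ f`
  suffices hmain : Ψ (F.comp (eK K)) = Φ₀ f by
    convert hmain using 2
    ext z
    show f (z:ℂ).im = F ((eK K) z)
    exact (FF_uS f hf ((z:ℂ)).im).symm
  -- approximation
  have main : ∀ ε : ℝ, 0 < ε →
      ‖Ψ (F.comp (eK K)) - Φ₀ f‖ ≤ (D₁ + 1 + 2 * D₂) * ε := by
    intro ε hε
    obtain ⟨g, hgA, hgd⟩ := Metric.mem_closure_iff.mp (mem_closure_adjoin F) ε hε
    obtain ⟨hgC0, hgΨ⟩ := key g hgA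
    have hpt : ∀ w : ↥SS, ‖F w - g w‖ ≤ ε := by
      intro w
      have h1 : dist (F w) (g w) ≤ dist F g := ContinuousMap.dist_apply_le_dist w
      rw [← dist_eq_norm]
      exact le_trans h1 hgd.le
    have hsplit1 : Ψ (F.comp (eK K)) = Ψ ((F - g).comp (eK K)) + Ψ (g.comp (eK K)) := by
      rw [← hΨadd, ← ContinuousMap.add_comp, sub_add_cancel]
    have hfg : MemC0 (fun β => f β - (g (uS β) - g zS)) := hf.sub' hgC0
    have hsplit2 : Φ₀ f = Φ₀ (fun β => f β - (g (uS β) - g zS))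
        + Φ₀ (fun β => g (uS β) - g zS) := by
      rw [← hadd _ _ hfg hgC0]
      congr 1
      funext β
      show f β = f β - (g (uS β) - g zS) + (g (uS β) - g zS)
      ring
    have heq : Ψ (F.comp (eK K)) - Φ₀ f
        = Ψ ((F - g).comp (eK K)) + g zS • (1 : X →L[ℂ] X)
          - Φ₀ (fun β => f β - (g (uS β) - g zS)) := by
      rw [hsplit1, hsplit2, hgΨ]
      abel
    rw [heq]
    have n1 : ‖Ψ ((F - g).comp (eK K))‖ ≤ D₁ * ε := by
      refine le_trans (hC₁' _) (mul_le_mul_of_nonneg_left ?_ hD₁0)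
      refine Real.iSup_le ?_ hε.le
      intro z
      show ‖(F - g) ((eK K) z)‖ ≤ ε
      rw [ContinuousMap.sub_apply]
      exact hpt _
    have n2 : ‖g zS • (1 : X →L[ℂ] X)‖ ≤ ε := by
      rw [norm_smul (g zS) (1 : X →L[ℂ] X)]
      have h1 : ‖g zS‖ ≤ ε := by
        have := hpt zS
        rw [hFdef, FF_zS, zero_sub, norm_neg] at this
        exact this
      calc ‖g zS‖ * ‖(1 : X →L[ℂ] X)‖ ≤ ‖g zS‖ * 1 :=
            mul_le_mul_of_nonneg_left ContinuousLinearMap.norm_id_le (norm_nonneg _)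
        _ = ‖g zS‖ := mul_one _
        _ ≤ ε := h1
    have n3 : ‖Φ₀ (fun β => f β - (g (uS β) - g zS))‖ ≤ D₂ * (2 * ε) := by
      refine le_trans (hC₂' _ hfg) (mul_le_mul_of_nonneg_left ?_ hD₂0)
      refine Real.iSup_le ?_ (by linarith)
      intro β
      have h1 := hpt (uS β)
      have h2 := hpt zS
      have h3 : f β - (g (uS β) - g zS) = (F (uS β) - g (uS β)) - (F zS - g zS) := by
        rw [hFdef, FF_uS, FF_zS]
        ring
      rw [h3]
      calc ‖(F (uS β) - g (uS β)) - (F zS - g zS)‖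
          ≤ ‖F (uS β) - g (uS β)‖ + ‖F zS - g zS‖ := norm_sub_le _ _
        _ ≤ ε + ε := add_le_add h1 h2
        _ = 2 * ε := by ring
    calc ‖Ψ ((F - g).comp (eK K)) + g zS • (1 : X →L[ℂ] X)
          - Φ₀ (fun β => f β - (g (uS β) - g zS))‖
        ≤ ‖Ψ ((F - g).comp (eK K)) + g zS • (1 : X →L[ℂ] X)‖
          + ‖Φ₀ (fun β => f β - (g (uS β) - g zS))‖ := norm_sub_le _ _
      _ ≤ ‖Ψ ((F - g).comp (eK K))‖ + ‖g zS • (1 : X →L[ℂ] X)‖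
          + ‖Φ₀ (fun β => f β - (g (uS β) - g zS))‖ := by
            have := norm_add_le (Ψ ((F - g).comp (eK K))) (g zS • (1 : X →L[ℂ] X))
            linarith
      _ ≤ D₁ * ε + ε + D₂ * (2 * ε) := by linarith
      _ = (D₁ + 1 + 2 * D₂) * ε := by ring
  -- conclude
  have hM0 : 0 ≤ D₁ + 1 + 2 * D₂ := by linarith
  have hfinal : ‖Ψ (F.comp (eK K)) - Φ₀ f‖ ≤ 0 := by
    apply le_of_forall_pos_le_add
    intro ε hε
    have hε' : 0 < ε / (D₁ + 1 + 2 * D₂ + 1) := by positivity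
    have h1 := main _ hε'
    have h2 : (D₁ + 1 + 2 * D₂) * (ε / (D₁ + 1 + 2 * D₂ + 1)) ≤ ε := by
      rw [div_eq_mul_inv, ← mul_assoc]
      rw [mul_comm (D₁ + 1 + 2 * D₂) ε, mul_assoc]
      nth_rewrite 2 [← mul_one ε]
      apply mul_le_mul_of_nonneg_left _ hε.le
      rw [mul_inv_le_iff₀ (by linarith), one_mul]
      linarith
    linarith
  have := norm_le_zero_iff.mp hfinal
  exact sub_eq_zero.mp this
end
end

section
/- Let Y be a complex Banach space and let Z be a bounded operator on Y with σ(Z) ⊆ iℝ. Let K′ ⊆ ℝ be compact such that {β ∈ ℝ : iβ ∈ σ(Z)} is contained in the interior of K′. Then lim_{α→0+} ∫_{ℝ∖K′} ‖(α+iβ−Z)⁻¹ − (−α+iβ−Z)⁻¹‖ dβ = 0, where for α > 0 and β ∈ ℝ∖K′ the operators ±α+iβ−Z are invertible in L(Y) (since ±α+iβ ∉ iℝ ⊇ σ(Z) when α ≠ 0, and iβ ∉ σ(Z) for β ∉ K′). -/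
open Complex MeasureTheory Filter Topology
open scoped ENNReal NNReal Classical

noncomputable section

variable {X : Type*} [NormedAddCommGroup X] [NormedSpace ℂ X]

private lemma ring_inverse_sub_inverse {A : Type*} [Ring A] {u v : A}
    (hu : IsUnit u) (hv : IsUnit v) :
    Ring.inverse u - Ring.inverse v = Ring.inverse u * (v - u) * Ring.inverse v := by
  rw [mul_sub, sub_mul, mul_assoc, Ring.mul_inverse_cancel v hv, mul_one,
    Ring.inverse_mul_cancel u hu, one_mul]

/-- Quantitative resolvent bound. -/
private lemma resolvent_norm_le [CompleteSpace X] (Z : X →L[ℂ] X) {w : ℂ}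
    (hu : IsUnit (w • (1 : X →L[ℂ] X) - Z)) (hw : ‖Z‖ < ‖w‖) :
    ‖Ring.inverse (w • (1 : X →L[ℂ] X) - Z)‖ ≤ (‖w‖ - ‖Z‖)⁻¹ := by
  set v : X →L[ℂ] X := Ring.inverse (w • (1 : X →L[ℂ] X) - Z) with hv
  have hvu : v * (w • (1 : X →L[ℂ] X) - Z) = 1 := Ring.inverse_mul_cancel _ hu
  have key : w • v = 1 + v * Z := by
    have : v * (w • (1 : X →L[ℂ] X)) - v * Z = 1 := by rw [← mul_sub]; exact hvu
    have h2 : w • v = 1 + v * Z := by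
      rw [← this, mul_smul_comm, mul_one, sub_add_cancel]
    exact h2
  have h1 : ‖w‖ * ‖v‖ ≤ 1 + ‖v‖ * ‖Z‖ := by
    calc ‖w‖ * ‖v‖ = ‖w • v‖ := (norm_smul w v).symm
    _ = ‖1 + v * Z‖ := by rw [key]
    _ ≤ ‖(1 : X →L[ℂ] X)‖ + ‖v * Z‖ := norm_add_le _ _
    _ ≤ 1 + ‖v‖ * ‖Z‖ := by
        gcongr
        · exact ContinuousLinearMap.norm_id_le
        · exact norm_mul_le _ _
  have hpos : 0 < ‖w‖ - ‖Z‖ := by linarith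
  rw [inv_eq_one_div, le_div_iff₀ hpos]
  nlinarith

set_option maxHeartbeats 2000000 in
/-- **The resolvent-difference integral away from the spectrum tends to `0`**
(the limit (3.1) in the proof of Lemma 3.1). -/
theorem resolvent_difference_integral_tendsto_zero [CompleteSpace X]
    (Z : X →L[ℂ] X) (hσ : spectrum ℂ Z ⊆ {z : ℂ | z.re = 0})
    (K' : Set ℝ) (hK' : IsCompact K')
    (hsub : {β : ℝ | (β : ℂ) * Complex.I ∈ spectrum ℂ Z} ⊆ interior K') :
    (∀ α : ℝ, 0 < α → ∀ β : ℝ, β ∉ K' →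
      IsUnit ((((α : ℂ) + (β : ℂ) * Complex.I) • (1 : X →L[ℂ] X)) - Z) ∧
      IsUnit ((((-α : ℝ) + (β : ℂ) * Complex.I) • (1 : X →L[ℂ] X)) - Z)) ∧
    Tendsto (fun α : ℝ => ∫ β in K'ᶜ,
        ‖Ring.inverse ((((α : ℂ) + (β : ℂ) * Complex.I) • (1 : X →L[ℂ] X)) - Z)
          - Ring.inverse ((((-α : ℝ) + (β : ℂ) * Complex.I) • (1 : X →L[ℂ] X)) - Z)‖)
      (𝓝[>] (0:ℝ)) (𝓝 0) := by
  have hnotmem : ∀ w : ℂ, w.re ≠ 0 → IsUnit (w • (1 : X →L[ℂ] X) - Z) := by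
    intro w hw
    rw [← Algebra.algebraMap_eq_smul_one]
    exact spectrum.notMem_iff.mp (fun h => hw (hσ h))
  have hre : ∀ a β : ℝ, ((a : ℂ) + (β : ℂ) * Complex.I).re = a := by
    intro a β; simp
  have him : ∀ a β : ℝ, ((a : ℂ) + (β : ℂ) * Complex.I).im = β := by
    intro a β; simp
  have hBσ : ∀ a β : ℝ, β ∉ interior K' →
      IsUnit (((a : ℂ) + (β : ℂ) * Complex.I) • (1 : X →L[ℂ] X) - Z) := by
    intro a β hβ
    rcases eq_or_ne a 0 with rfl | ha
    · rw [← Algebra.algebraMap_eq_smul_one]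
      refine spectrum.notMem_iff.mp (fun h => hβ (hsub ?_))
      simpa using h
    · exact hnotmem _ (by rw [hre]; exact ha)
  refine ⟨fun α hα β hβ => ⟨hnotmem _ (by rw [hre]; exact hα.ne'),
      hnotmem _ (by rw [hre]; exact (neg_lt_zero.mpr hα).ne)⟩, ?_⟩
  set R : ℝ := 2 * ‖Z‖ + 2 with hRdef
  have hR2 : 2 ≤ R := by have := norm_nonneg Z; linarith
  set B : Set ℝ := closure (K'ᶜ) with hBdef
  have hBmem : ∀ β ∈ B, β ∉ interior K' := by
    intro β hβ
    rw [hBdef, closure_compl] at hβ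
    exact hβ
  set T : Set ℂ := (fun p : ℝ × ℝ => (p.1 : ℂ) + (p.2 : ℂ) * Complex.I) ''
    (Set.Icc (-1) 1 ×ˢ (B ∩ Set.Icc (-R) R)) with hTdef
  have hTcomp : IsCompact T := by
    refine IsCompact.image ?_ (by continuity)
    exact isCompact_Icc.prod (isCompact_Icc.inter_left isClosed_closure)
  have hTunit : ∀ w ∈ T, IsUnit (w • (1 : X →L[ℂ] X) - Z) := by
    rintro w ⟨⟨a, β⟩, ⟨ha, hβ, _⟩, rfl⟩
    exact hBσ a β (hBmem β hβ)
  have hcont : ContinuousOn (fun w : ℂ => Ring.inverse (w • (1 : X →L[ℂ] X) - Z)) T := by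
    intro w hw
    apply ContinuousAt.continuousWithinAt
    have hu := hTunit w hw
    have h1 : ContinuousAt (fun w : ℂ => w • (1 : X →L[ℂ] X) - Z) w :=
      ((continuous_id.smul continuous_const).sub continuous_const).continuousAt
    have h2 : ContinuousAt Ring.inverse (w • (1 : X →L[ℂ] X) - Z) := by
      have := NormedRing.inverse_continuousAt hu.unit
      rwa [hu.unit_spec] at this
    exact ContinuousAt.comp (f := fun w : ℂ => w • (1 : X →L[ℂ] X) - Z) h2 h1
  obtain ⟨M₀, hM₀⟩ := hTcomp.exists_bound_of_continuousOn hcont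
  set M : ℝ := max M₀ 0 with hMdef
  have hMnn : 0 ≤ M := le_max_right _ _
  have hM : ∀ w ∈ T, ‖Ring.inverse (w • (1 : X →L[ℂ] X) - Z)‖ ≤ M :=
    fun w hw => (hM₀ w hw).trans (le_max_left _ _)
  set C : ℝ := max (M ^ 2 * (1 + R ^ 2)) 8 with hCdef
  have hC8 : (8 : ℝ) ≤ C := le_max_right _ _
  have hCM : M ^ 2 * (1 + R ^ 2) ≤ C := le_max_left _ _
  -- the key pointwise bound
  have key : ∀ α : ℝ, α ∈ Set.Ioc (0:ℝ) 1 → ∀ β : ℝ, β ∉ K' →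
      ‖Ring.inverse ((((α : ℂ) + (β : ℂ) * Complex.I) • (1 : X →L[ℂ] X)) - Z)
        - Ring.inverse ((((-α : ℝ) + (β : ℂ) * Complex.I) • (1 : X →L[ℂ] X)) - Z)‖
        ≤ 2 * α * C * (1 / (1 + β ^ 2)) := by
    intro α hα β hβ
    obtain ⟨hα0, hα1⟩ := hα
    set a : ℂ := (α : ℂ) + (β : ℂ) * Complex.I with hadef
    set b : ℂ := ((-α : ℝ) : ℂ) + (β : ℂ) * Complex.I with hbdef
    have hua : IsUnit (a • (1 : X →L[ℂ] X) - Z) := hnotmem _ (by rw [hadef, hre]; exact hα0.ne')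
    have hub : IsUnit (b • (1 : X →L[ℂ] X) - Z) := hnotmem _
      (by rw [hbdef, hre]; exact (neg_lt_zero.mpr hα0).ne)
    set ra : X →L[ℂ] X := Ring.inverse (a • (1 : X →L[ℂ] X) - Z) with hradef
    set rb : X →L[ℂ] X := Ring.inverse (b • (1 : X →L[ℂ] X) - Z) with hrbdef
    have hdiff : ra - rb = ((-2 * α : ℝ) : ℂ) • (ra * rb) := by
      rw [hradef, hrbdef, ring_inverse_sub_inverse hua hub]
      have hba : (b • (1 : X →L[ℂ] X) - Z) - (a • (1 : X →L[ℂ] X) - Z)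
          = ((-2 * α : ℝ) : ℂ) • (1 : X →L[ℂ] X) := by
        rw [sub_sub_sub_cancel_right, ← sub_smul]
        congr 1
        rw [hadef, hbdef]
        push_cast
        ring
      rw [hba, mul_smul_comm, mul_one, smul_mul_assoc]
    have hnorm : ‖ra - rb‖ ≤ 2 * α * (‖ra‖ * ‖rb‖) := by
      rw [hdiff]
      calc ‖((-2 * α : ℝ) : ℂ) • (ra * rb)‖
          ≤ ‖((-2 * α : ℝ) : ℂ)‖ * ‖ra * rb‖ := ContinuousLinearMap.opNorm_smul_le _ _
        _ ≤ (2 * α) * (‖ra‖ * ‖rb‖) := by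
            have e1 : ‖((-2 * α : ℝ) : ℂ)‖ = 2 * α := by
              rw [Complex.norm_real, Real.norm_eq_abs, abs_of_nonpos (by linarith)]
              ring
            rw [e1]
            exact mul_le_mul_of_nonneg_left (norm_mul_le _ _) (by linarith)
    have h1β : (0:ℝ) < 1 + β ^ 2 := by positivity
    have hrann : (0:ℝ) ≤ ‖ra‖ := norm_nonneg _
    have hrbnn : (0:ℝ) ≤ ‖rb‖ := norm_nonneg _
    rcases le_or_gt (|β|) R with hβR | hβR
    · -- compact region: both points in T
      have hβI : β ∈ B ∩ Set.Icc (-R) R :=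
        ⟨subset_closure hβ, Set.mem_Icc.mpr (abs_le.mp hβR)⟩
      have ha1 : (α : ℝ) ∈ Set.Icc (-1:ℝ) 1 := Set.mem_Icc.mpr ⟨by linarith, hα1⟩
      have ha2 : (-α : ℝ) ∈ Set.Icc (-1:ℝ) 1 := Set.mem_Icc.mpr ⟨by linarith, by linarith⟩
      have hmema : a ∈ T := ⟨(α, β), ⟨ha1, hβI⟩, rfl⟩
      have hmemb : b ∈ T := ⟨(-α, β), ⟨ha2, hβI⟩, rfl⟩
      have hb2 : β ^ 2 ≤ R ^ 2 := by
        calc β ^ 2 = |β| ^ 2 := (_root_.sq_abs β).symm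
          _ ≤ R ^ 2 := pow_le_pow_left₀ (abs_nonneg β) hβR 2
      have haM : ‖ra‖ ≤ M := hM a hmema
      have hbM : ‖rb‖ ≤ M := hM b hmemb
      have hprod : ‖ra‖ * ‖rb‖ ≤ M ^ 2 := by nlinarith
      have h2 : (‖ra‖ * ‖rb‖) * (1 + β ^ 2) ≤ M ^ 2 * (1 + R ^ 2) :=
        mul_le_mul hprod (by linarith) h1β.le (by positivity)
      refine hnorm.trans ?_
      rw [mul_one_div, le_div_iff₀ h1β]
      nlinarith
    · -- tail region
      have hZβ : ‖Z‖ < |β| := by linarith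
      have hima : |a.im| ≤ ‖a‖ := by exact Complex.abs_im_le_norm a
      have himb : |b.im| ≤ ‖b‖ := by exact Complex.abs_im_le_norm b
      rw [hadef, him] at hima
      rw [hbdef, him] at himb
      have hZa : ‖Z‖ < ‖a‖ := lt_of_lt_of_le hZβ hima
      have hZb : ‖Z‖ < ‖b‖ := lt_of_lt_of_le hZβ himb
      have hra : ‖ra‖ ≤ (|β| - ‖Z‖)⁻¹ := by
        refine (resolvent_norm_le Z hua hZa).trans ?_
        exact inv_anti₀ (by linarith) (by linarith)
      have hrb : ‖rb‖ ≤ (|β| - ‖Z‖)⁻¹ := by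
        refine (resolvent_norm_le Z hub hZb).trans ?_
        exact inv_anti₀ (by linarith) (by linarith)
      have hinvnn : (0:ℝ) ≤ (|β| - ‖Z‖)⁻¹ := inv_nonneg.mpr (by linarith)
      have step : ‖ra‖ * ‖rb‖ ≤ C * (1 / (1 + β ^ 2)) := by
        have h2 : ‖ra‖ * ‖rb‖ ≤ (|β| - ‖Z‖)⁻¹ * (|β| - ‖Z‖)⁻¹ :=
          mul_le_mul hra hrb hrbnn hinvnn
        refine h2.trans ?_
        rw [← mul_inv, mul_one_div, inv_eq_one_div, div_le_div_iff₀ (by nlinarith) h1β]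
        have habs : |β| ^ 2 = β ^ 2 := _root_.sq_abs β
        have hhalf : |β| / 2 < |β| - ‖Z‖ := by
          have : 2 * ‖Z‖ < |β| := by linarith
          linarith
        nlinarith [abs_nonneg β, sq_nonneg (|β| - ‖Z‖ - |β| / 2)]
      calc ‖ra - rb‖ ≤ 2 * α * (‖ra‖ * ‖rb‖) := hnorm
        _ ≤ 2 * α * (C * (1 / (1 + β ^ 2))) :=
            mul_le_mul_of_nonneg_left step (by linarith)
        _ = 2 * α * C * (1 / (1 + β ^ 2)) := by ring
  -- integral bound and squeeze
  have hKm : MeasurableSet (K'ᶜ : Set ℝ) := hK'.isClosed.measurableSet.compl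
  set D : ℝ := ∫ β in K'ᶜ, (1 / (1 + β ^ 2)) with hDdef
  have hint : Integrable (fun β : ℝ => 1 / (1 + β ^ 2)) (volume.restrict K'ᶜ) := by
    have h := integrable_inv_one_add_sq
    simpa [one_div] using h.restrict (s := K'ᶜ)
  have hbound : ∀ α : ℝ, α ∈ Set.Ioc (0:ℝ) 1 →
      (∫ β in K'ᶜ, ‖Ring.inverse ((((α : ℂ) + (β : ℂ) * Complex.I) • (1 : X →L[ℂ] X)) - Z)
          - Ring.inverse ((((-α : ℝ) + (β : ℂ) * Complex.I) • (1 : X →L[ℂ] X)) - Z)‖)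
        ≤ (2 * C * D) * α := by
    intro α hα
    have hmono : (∫ β in K'ᶜ,
        ‖Ring.inverse ((((α : ℂ) + (β : ℂ) * Complex.I) • (1 : X →L[ℂ] X)) - Z)
          - Ring.inverse ((((-α : ℝ) + (β : ℂ) * Complex.I) • (1 : X →L[ℂ] X)) - Z)‖)
        ≤ ∫ β in K'ᶜ, (2 * α * C) * (1 / (1 + β ^ 2)) := by
      refine integral_mono_of_nonneg (Eventually.of_forall fun β => norm_nonneg _)
        (hint.const_mul _) ?_
      exact (ae_restrict_iff' hKm).mpr (Eventually.of_forall fun β hβ => key α hα β hβ)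
    refine hmono.trans ?_
    rw [integral_const_mul, ← hDdef]
    ring_nf
    exact le_refl _
  refine squeeze_zero' (g := fun α : ℝ => (2 * C * D) * α)
    (Eventually.of_forall fun α => integral_nonneg fun β => norm_nonneg _) ?_ ?_
  · filter_upwards [Ioc_mem_nhdsGT_of_mem (by norm_num : (0:ℝ) ∈ Set.Ico 0 1)] with α hα
    exact hbound α hα
  · have h : Tendsto (fun α : ℝ => (2 * C * D) * α) (𝓝 0) (𝓝 ((2 * C * D) * 0)) :=
      (continuous_const.mul continuous_id).tendsto 0
    rw [mul_zero] at h
    exact h.mono_left nhdsWithin_le_nhds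
end
end
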